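/- Let g11, g22 : ℝ² → ℝ be twice continuously differentiable on an open rectangle D, and let G(u,v) = diag(g11(u,v), g22(u,v)). Assume that for every center M = (u0, v0) ∈ D and every α ≠ 0 such that the closed square with center M and corner offset (α, α) lies in D, the energies of the two diagonals of that square are equal: ∫_{-1}^{1} ḋ1(t)ᵀ G(d1(t)) ḋ1(t) dt = ∫_{-1}^{1} ḋ2(t)ᵀ G(d2(t)) ḋ2(t) dt, where d1(t) = M + t(α, α) and d2(t) = M + t(−α, α). Then ∂²g11/∂u∂v (u0, v0) + ∂²g22/∂u∂v (u0, v0) = 0 at every point (u0, v0) ∈ D. -/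

import Mathlib

open intervalIntegral Set Filter Asymptotics Topology

/-- If a continuous function on `(-b,b)` has vanishing symmetric integrals
`∫_{-a}^{a} g = 0` for all `a ∈ (0,b)`, then `g c + g (-c) = 0` on `(0,b)`. -/
lemma aux_reflect (g : ℝ → ℝ) (b : ℝ) (hb : 0 < b)
    (hg : ContinuousOn g (Set.Ioo (-b) b))
    (h0 : ∀ a ∈ Set.Ioo (0:ℝ) b, (∫ s in (-a)..a, g s) = 0) :
    ∀ c ∈ Set.Ioo (0:ℝ) b, g c + g (-c) = 0 := by
  intro c hc
  obtain ⟨hc0, hcb⟩ := hc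
  have hint : ∀ x y : ℝ, -b < x → x < b → -b < y → y < b →
      IntervalIntegrable g MeasureTheory.volume x y := by
    intro x y hx1 hx2 hy1 hy2
    apply (hg.mono ?_).intervalIntegrable
    intro z hz
    rcases Set.mem_uIcc.1 hz with ⟨h1, h2⟩ | ⟨h1, h2⟩ <;>
      exact ⟨by linarith, by linarith⟩
  set Φ₁ : ℝ → ℝ := fun x => ∫ s in (-c)..x, g s with hΦ₁
  set Φ₂ : ℝ → ℝ := fun x => ∫ s in (-c)..(-x), g s with hΦ₂
  have hd1 : HasDerivAt Φ₁ (g c) c := by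
    apply integral_hasDerivAt_right (hint _ _ (by linarith) (by linarith) (by linarith) hcb)
    · exact (hg.stronglyMeasurableAtFilter isOpen_Ioo) _ ⟨by linarith, hcb⟩
    · exact (hg.continuousAt (isOpen_Ioo.mem_nhds ⟨by linarith, hcb⟩))
  have hd2i : HasDerivAt (fun y => ∫ s in (-c)..y, g s) (g (-c)) (-c) := by
    apply integral_hasDerivAt_right
      (hint _ _ (by linarith) (by linarith) (by linarith) (by linarith))
    · exact (hg.stronglyMeasurableAtFilter isOpen_Ioo) _ ⟨by linarith, by linarith⟩
    · exact (hg.continuousAt (isOpen_Ioo.mem_nhds ⟨by linarith, by linarith⟩))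
  have hd2 : HasDerivAt Φ₂ (-g (-c)) c := by
    have := hd2i.comp c (hasDerivAt_neg c)
    simpa [hΦ₂, mul_comm, Function.comp_def] using this
  have hdiff : HasDerivAt (fun x => Φ₁ x - Φ₂ x) (g c + g (-c)) c := by
    have := hd1.sub hd2
    rw [sub_neg_eq_add] at this
    exact this
  have hev : (fun x => Φ₁ x - Φ₂ x) =ᶠ[nhds c] (fun _ => (0:ℝ)) := by
    filter_upwards [isOpen_Ioo.mem_nhds (show c ∈ Set.Ioo 0 b from ⟨hc0, hcb⟩)] with x hx
    obtain ⟨hx0, hxb⟩ := hx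
    have hadj : (∫ s in (-c)..(-x), g s) + (∫ s in (-x)..x, g s) = ∫ s in (-c)..x, g s :=
      integral_add_adjacent_intervals
        (hint _ _ (by linarith) (by linarith) (by linarith) (by linarith))
        (hint _ _ (by linarith) (by linarith) (by linarith) (by linarith))
    have h0x := h0 x ⟨hx0, hxb⟩
    simp only [hΦ₁, hΦ₂]
    linarith [hadj]
  have hzero : deriv (fun x => Φ₁ x - Φ₂ x) c = 0 := by
    rw [hev.deriv_eq]; simp
  rw [hdiff.deriv] at hzero
  exact hzero

/-- The iterated partial derivative `∂u ∂v G` equals the second `fderiv`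
applied to the coordinate vectors, for a `C²` function on an open set. -/
lemma mixed_eq (G : ℝ × ℝ → ℝ) (D : Set (ℝ × ℝ)) (hD : IsOpen D)
    (hG : ContDiffOn ℝ 2 G D) (u0 v0 : ℝ) (hp : (u0, v0) ∈ D) :
    deriv (fun u => deriv (fun v => G (u, v)) v0) u0
      = fderiv ℝ (fderiv ℝ G) (u0, v0) (1, 0) (0, 1) := by
  have hGdiff : DifferentiableOn ℝ G D := hG.differentiableOn two_ne_zero
  set U : Set ℝ := {u : ℝ | (u, v0) ∈ D} with hU
  have hUopen : IsOpen U := hD.preimage (by fun_prop)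
  have hu0 : u0 ∈ U := hp
  have hev : ∀ u ∈ U, deriv (fun v => G (u, v)) v0 = fderiv ℝ G (u, v0) (0, 1) := by
    intro u hu
    have hdiff : DifferentiableAt ℝ G (u, v0) := hGdiff.differentiableAt (hD.mem_nhds hu)
    have hline : HasDerivAt (fun v => ((u, v) : ℝ × ℝ)) (0, 1) v0 :=
      (hasDerivAt_const v0 u).prodMk (hasDerivAt_id' v0)
    exact (hdiff.hasFDerivAt.comp_hasDerivAt v0 hline).deriv
  have hdG : DifferentiableAt ℝ (fderiv ℝ G) (u0, v0) := by
    have h1 : ContDiffOn ℝ 1 (fderiv ℝ G) D := hG.fderiv_of_isOpen hD (by norm_num)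
    exact (h1.differentiableOn one_ne_zero).differentiableAt (hD.mem_nhds hp)
  have hline1 : HasDerivAt (fun u => ((u, v0) : ℝ × ℝ)) (1, 0) u0 :=
    (hasDerivAt_id' u0).prodMk (hasDerivAt_const u0 v0)
  have h1 : HasDerivAt (fun u => fderiv ℝ G (u, v0))
      (fderiv ℝ (fderiv ℝ G) (u0, v0) (1, 0)) u0 :=
    hdG.hasFDerivAt.comp_hasDerivAt u0 hline1
  have h2 : HasDerivAt (fun u => fderiv ℝ G (u, v0) (0, 1))
      (fderiv ℝ (fderiv ℝ G) (u0, v0) (1, 0) (0, 1)) u0 := by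
    have := ((ContinuousLinearMap.apply ℝ ℝ ((0:ℝ), (1:ℝ))).hasFDerivAt).comp_hasDerivAt u0 h1
    simpa [Function.comp_def] using this
  have heq : (fun u => deriv (fun v => G (u, v)) v0)
      =ᶠ[𝓝 u0] (fun u => fderiv ℝ G (u, v0) (0, 1)) := by
    filter_upwards [hUopen.mem_nhds hu0] with u hu
    exact hev u hu
  rw [heq.deriv_eq, h2.deriv]

set_option maxHeartbeats 3200000 in
/-- If for a diagonal metric `G = diag(g11, g22)` the two diagonals of every
parameter-line square inside `D` have the same energy, then
`∂²g11/∂u∂v + ∂²g22/∂u∂v = 0` everywhere on `D`. -/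
theorem equal_square_diagonal_energy_implies_mixed_partials_sum_zero
    (umin umax vmin vmax : ℝ)
    (g11 g22 : ℝ × ℝ → ℝ)
    (hg11 : ContDiffOn ℝ 2 g11 (Set.Ioo umin umax ×ˢ Set.Ioo vmin vmax))
    (hg22 : ContDiffOn ℝ 2 g22 (Set.Ioo umin umax ×ˢ Set.Ioo vmin vmax))
    (hE : ∀ u0 v0 α : ℝ, α ≠ 0 →
      Set.Icc (u0 - |α|) (u0 + |α|) ⊆ Set.Ioo umin umax →
      Set.Icc (v0 - |α|) (v0 + |α|) ⊆ Set.Ioo vmin vmax →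
      (∫ t in (-1:ℝ)..1,
          (α ^ 2 * g11 (u0 + t * α, v0 + t * α) +
           α ^ 2 * g22 (u0 + t * α, v0 + t * α))) =
      (∫ t in (-1:ℝ)..1,
          (α ^ 2 * g11 (u0 - t * α, v0 + t * α) +
           α ^ 2 * g22 (u0 - t * α, v0 + t * α)))) :
    ∀ p ∈ Set.Ioo umin umax ×ˢ Set.Ioo vmin vmax,
      deriv (fun u => deriv (fun v => g11 (u, v)) p.2) p.1 +
        deriv (fun u => deriv (fun v => g22 (u, v)) p.2) p.1 = 0 := by
  set D : Set (ℝ × ℝ) := Set.Ioo umin umax ×ˢ Set.Ioo vmin vmax with hDdef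
  have hD : IsOpen D := (isOpen_Ioo).prod isOpen_Ioo
  set F : ℝ × ℝ → ℝ := fun x => g11 x + g22 x with hFdef
  have hF : ContDiffOn ℝ 2 F D := hg11.add hg22
  have hFc : ContinuousOn F D := hF.continuousOn
  rintro ⟨u0, v0⟩ hp
  have hp' : ((u0, v0) : ℝ × ℝ) ∈ D := hp
  obtain ⟨⟨hu1, hu2⟩, hv1, hv2⟩ := hp
  set ε : ℝ := (min (min (umax - u0) (u0 - umin)) (min (vmax - v0) (v0 - vmin))) / 6 with hεdef
  have hε : 0 < ε := by
    apply div_pos _ (by norm_num)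
    exact lt_min (lt_min (by linarith) (by linarith)) (lt_min (by linarith) (by linarith))
  have hε6u1 : 6 * ε ≤ umax - u0 := by
    rw [hεdef]
    nlinarith [min_le_left (min (umax - u0) (u0 - umin)) (min (vmax - v0) (v0 - vmin)),
      min_le_left (umax - u0) (u0 - umin)]
  have hε6u2 : 6 * ε ≤ u0 - umin := by
    rw [hεdef]
    nlinarith [min_le_left (min (umax - u0) (u0 - umin)) (min (vmax - v0) (v0 - vmin)),
      min_le_right (umax - u0) (u0 - umin)]
  have hε6v1 : 6 * ε ≤ vmax - v0 := by
    rw [hεdef]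
    nlinarith [min_le_right (min (umax - u0) (u0 - umin)) (min (vmax - v0) (v0 - vmin)),
      min_le_left (vmax - v0) (v0 - vmin)]
  have hε6v2 : 6 * ε ≤ v0 - vmin := by
    rw [hεdef]
    nlinarith [min_le_right (min (umax - u0) (u0 - umin)) (min (vmax - v0) (v0 - vmin)),
      min_le_right (vmax - v0) (v0 - vmin)]
  have hmem : ∀ x y : ℝ, |x - u0| < 5*ε → |y - v0| < 5*ε → (x, y) ∈ D := by
    intro x y hx hy
    rw [abs_lt] at hx hy
    exact ⟨⟨by linarith, by linarith⟩, ⟨by linarith, by linarith⟩⟩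
  have hboxu : ∀ x : ℝ, |x - u0| ≤ 4*ε → x ∈ Set.Ioo umin umax := by
    intro x hx; rw [abs_le] at hx
    exact ⟨by linarith, by linarith⟩
  have hboxv : ∀ y : ℝ, |y - v0| ≤ 4*ε → y ∈ Set.Ioo vmin vmax := by
    intro y hy; rw [abs_le] at hy
    exact ⟨by linarith, by linarith⟩
  -- Step 1: vanishing symmetric integrals for every nearby center
  have hsym : ∀ m n : ℝ, |m - u0| ≤ 2*ε → |n - v0| ≤ 2*ε → ∀ a ∈ Set.Ioo (0:ℝ) (2*ε),
      (∫ s in (-a)..a, (F (m + s, n + s) - F (m - s, n + s))) = 0 := by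
    intro m n hm hn a ha
    obtain ⟨ha0, ha2⟩ := ha
    have hane : a ≠ 0 := ne_of_gt ha0
    have haabs : |a| = a := abs_of_pos ha0
    have key := hE m n a hane ?subu ?subv
    case subu =>
      intro x hx
      rw [haabs] at hx
      apply hboxu
      rw [abs_le] at hm ⊢
      obtain ⟨h1, h2⟩ := hx
      constructor <;> linarith
    case subv =>
      intro y hy
      rw [haabs] at hy
      apply hboxv
      rw [abs_le] at hn ⊢
      obtain ⟨h1, h2⟩ := hy
      constructor <;> linarith
    set f1 : ℝ → ℝ := fun s => F (m + s, n + s) with hf1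
    set f2 : ℝ → ℝ := fun s => F (m - s, n + s) with hf2
    have hL : (∫ t in (-1:ℝ)..1,
        (a ^ 2 * g11 (m + t * a, n + t * a) + a ^ 2 * g22 (m + t * a, n + t * a)))
        = a ^ 2 * ∫ t in (-1:ℝ)..1, f1 (t * a) := by
      rw [← intervalIntegral.integral_const_mul]
      congr 1; ext t; simp [hf1, hFdef]; ring
    have hR : (∫ t in (-1:ℝ)..1,
        (a ^ 2 * g11 (m - t * a, n + t * a) + a ^ 2 * g22 (m - t * a, n + t * a)))
        = a ^ 2 * ∫ t in (-1:ℝ)..1, f2 (t * a) := by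
      rw [← intervalIntegral.integral_const_mul]
      congr 1; ext t; simp [hf2, hFdef]; ring
    rw [hL, hR, intervalIntegral.integral_comp_mul_right f1 hane,
      intervalIntegral.integral_comp_mul_right f2 hane] at key
    have key2 : (∫ s in (-a)..a, f1 s) = ∫ s in (-a)..a, f2 s := by
      have h1 : (-1 : ℝ) * a = -a := by ring
      have h2 : (1 : ℝ) * a = a := by ring
      rw [h1, h2] at key
      have ha2ne : (a:ℝ)^2 * a⁻¹ ≠ 0 := by positivity
      rw [smul_eq_mul, smul_eq_mul, ← mul_assoc, ← mul_assoc] at key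
      exact mul_left_cancel₀ ha2ne key
    have hcont1 : ContinuousOn f1 (Set.uIcc (-a) a) := by
      apply hFc.comp (by fun_prop)
      intro s hs
      rw [Set.uIcc_of_le (by linarith)] at hs
      obtain ⟨h1, h2⟩ := hs
      rw [abs_le] at hm hn
      exact hmem _ _ (by rw [abs_lt]; constructor <;> linarith)
        (by rw [abs_lt]; constructor <;> linarith)
    have hcont2 : ContinuousOn f2 (Set.uIcc (-a) a) := by
      apply hFc.comp (by fun_prop)
      intro s hs
      rw [Set.uIcc_of_le (by linarith)] at hs
      obtain ⟨h1, h2⟩ := hs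
      rw [abs_le] at hm hn
      exact hmem _ _ (by rw [abs_lt]; constructor <;> linarith)
        (by rw [abs_lt]; constructor <;> linarith)
    rw [intervalIntegral.integral_sub hcont1.intervalIntegrable hcont2.intervalIntegrable,
      key2, sub_self]
  -- Step 2: corner identity
  have hcorner : ∀ m n : ℝ, |m - u0| ≤ 2*ε → |n - v0| ≤ 2*ε → ∀ c ∈ Set.Ioo (0:ℝ) (2*ε),
      F (m + c, n + c) - F (m - c, n + c) + (F (m - c, n - c) - F (m + c, n - c)) = 0 := by
    intro m n hm hn c hc
    have hgc : ContinuousOn (fun s : ℝ => F (m + s, n + s) - F (m - s, n + s))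
        (Set.Ioo (-(2*ε)) (2*ε)) := by
      apply ContinuousOn.sub
      · apply hFc.comp (by fun_prop)
        intro s hs
        obtain ⟨h1, h2⟩ := hs
        rw [abs_le] at hm hn
        exact hmem _ _ (by rw [abs_lt]; constructor <;> linarith)
          (by rw [abs_lt]; constructor <;> linarith)
      · apply hFc.comp (by fun_prop)
        intro s hs
        obtain ⟨h1, h2⟩ := hs
        rw [abs_le] at hm hn
        exact hmem _ _ (by rw [abs_lt]; constructor <;> linarith)
          (by rw [abs_lt]; constructor <;> linarith)
    have := aux_reflect _ (2*ε) (by linarith) hgc (hsym m n hm hn) c hc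
    have e1 : m + -c = m - c := by ring
    have e2 : n + -c = n - c := by ring
    have e3 : m - -c = m + c := by ring
    rw [e1, e2, e3] at this
    linarith
  -- Step 3: mixed second derivative of F vanishes
  have hp0 : ((u0, v0) : ℝ × ℝ) ∈ D := hp'
  have hdF : DifferentiableAt ℝ (fderiv ℝ F) (u0, v0) := by
    have h1 : ContDiffOn ℝ 1 (fderiv ℝ F) D := hF.fderiv_of_isOpen hD (by norm_num)
    exact (h1.differentiableOn one_ne_zero).differentiableAt (hD.mem_nhds hp0)
  set f'' : (ℝ × ℝ) →L[ℝ] (ℝ × ℝ) →L[ℝ] ℝ := fderiv ℝ (fderiv ℝ F) (u0, v0) with hf''def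
  have hmixed : f'' (1, 0) (0, 1) = 0 := by
    set v : ℝ × ℝ := (ε, 0) with hv
    set w : ℝ × ℝ := (0, ε) with hw
    set s : Set (ℝ × ℝ) := Set.Icc (u0 - 5*ε) (u0 + 5*ε) ×ˢ Set.Icc (v0 - 5*ε) (v0 + 5*ε)
      with hs
    have s_conv : Convex ℝ s := (convex_Icc _ _).prod (convex_Icc _ _)
    have hsint : interior s
        = Set.Ioo (u0 - 5*ε) (u0 + 5*ε) ×ˢ Set.Ioo (v0 - 5*ε) (v0 + 5*ε) := by
      rw [hs, interior_prod_eq, interior_Icc, interior_Icc]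
    have hintD : interior s ⊆ D := by
      rw [hsint]
      rintro ⟨x, y⟩ ⟨⟨hx1, hx2⟩, hy1, hy2⟩
      exact hmem x y (by rw [abs_lt]; constructor <;> linarith)
        (by rw [abs_lt]; constructor <;> linarith)
    have hFdiff : DifferentiableOn ℝ F D := hF.differentiableOn two_ne_zero
    have hf : ∀ y ∈ interior s, HasFDerivAt F (fderiv ℝ F y) y := by
      intro y hy
      exact (hFdiff.differentiableAt (hD.mem_nhds (hintD hy))).hasFDerivAt
    have xs : ((u0, v0) : ℝ × ℝ) ∈ s := by
      rw [hs]
      exact Set.mk_mem_prod (Set.mem_Icc.2 ⟨by linarith, by linarith⟩)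
        (Set.mem_Icc.2 ⟨by linarith, by linarith⟩)
    have hx : HasFDerivWithinAt (fderiv ℝ F) f'' (interior s) (u0, v0) :=
      hdF.hasFDerivAt.hasFDerivWithinAt
    have e4v : ((u0, v0) : ℝ × ℝ) + (4:ℝ) • v = (u0 + 4*ε, v0) := by
      rw [hv, Prod.smul_mk, Prod.mk_add_mk]; norm_num
    have e4w : ((u0, v0) : ℝ × ℝ) + (4:ℝ) • w = (u0, v0 + 4*ε) := by
      rw [hw, Prod.smul_mk, Prod.mk_add_mk]; norm_num
    have h4v : ((u0, v0) : ℝ × ℝ) + (4:ℝ) • v ∈ interior s := by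
      rw [e4v, hsint]
      exact Set.mk_mem_prod (Set.mem_Ioo.2 ⟨by linarith, by linarith⟩)
        (Set.mem_Ioo.2 ⟨by linarith, by linarith⟩)
    have h4w : ((u0, v0) : ℝ × ℝ) + (4:ℝ) • w ∈ interior s := by
      rw [e4w, hsint]
      exact Set.mk_mem_prod (Set.mem_Ioo.2 ⟨by linarith, by linarith⟩)
        (Set.mem_Ioo.2 ⟨by linarith, by linarith⟩)
    have A := s_conv.isLittleO_alternate_sum_square hf xs hx h4v h4w
    have haltzero : ∀ᶠ h in 𝓝[>] (0:ℝ),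
        F ((u0, v0) + h • (2 • v + 2 • w)) + F ((u0, v0) + h • (v + w))
          - F ((u0, v0) + h • (2 • v + w)) - F ((u0, v0) + h • (v + 2 • w)) = 0 := by
      filter_upwards [Ioo_mem_nhdsGT_of_mem (Set.mem_Ico.2 ⟨le_refl (0:ℝ), one_pos⟩)] with h hh
      obtain ⟨hh0, hh1⟩ := hh
      have hme1 : 0 < h * ε := mul_pos hh0 hε
      have hme2 : h * ε < 1 * ε := mul_lt_mul_of_pos_right hh1 hε
      have hc := hcorner (u0 + 3*h*ε/2) (v0 + 3*h*ε/2)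
        (by rw [abs_le]; constructor <;> linarith)
        (by rw [abs_le]; constructor <;> linarith)
        (h*ε/2) ⟨by positivity, by linarith⟩
      have e1 : ((u0, v0) : ℝ × ℝ) + h • (2 • v + 2 • w)
          = (u0 + 3*h*ε/2 + h*ε/2, v0 + 3*h*ε/2 + h*ε/2) := by
        rw [hv, hw]; simp [Prod.ext_iff]; constructor <;> ring
      have e2 : ((u0, v0) : ℝ × ℝ) + h • (v + w)
          = (u0 + 3*h*ε/2 - h*ε/2, v0 + 3*h*ε/2 - h*ε/2) := by
        rw [hv, hw]; simp [Prod.ext_iff]; constructor <;> ring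
      have e3 : ((u0, v0) : ℝ × ℝ) + h • (2 • v + w)
          = (u0 + 3*h*ε/2 + h*ε/2, v0 + 3*h*ε/2 - h*ε/2) := by
        rw [hv, hw]; simp [Prod.ext_iff]; constructor <;> ring
      have e4 : ((u0, v0) : ℝ × ℝ) + h • (v + 2 • w)
          = (u0 + 3*h*ε/2 - h*ε/2, v0 + 3*h*ε/2 + h*ε/2) := by
        rw [hv, hw]; simp [Prod.ext_iff]; constructor <;> ring
      rw [e1, e2, e3, e4]
      linarith [hc]
    have B : (fun h : ℝ => h ^ 2 • f'' v w) =o[𝓝[>] (0:ℝ)] fun h : ℝ => h ^ 2 := by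
      have A' : (fun h : ℝ => -(h ^ 2 • f'' v w)) =o[𝓝[>] (0:ℝ)] fun h : ℝ => h ^ 2 := by
        apply A.congr' _ (EventuallyEq.refl _ _)
        filter_upwards [haltzero] with h hh
        rw [show F ((u0, v0) + h • (2 • v + 2 • w)) + F ((u0, v0) + h • (v + w))
          - F ((u0, v0) + h • (2 • v + w)) - F ((u0, v0) + h • (v + 2 • w)) - h^2 • f'' v w
          = (F ((u0, v0) + h • (2 • v + 2 • w)) + F ((u0, v0) + h • (v + w))
          - F ((u0, v0) + h • (2 • v + w)) - F ((u0, v0) + h • (v + 2 • w)))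
            - h^2 • f'' v w from by ring, hh]
        ring
      simpa using A'.neg_left
    have hvw : f'' v w = 0 := by
      have C : (fun _ : ℝ => f'' v w) =o[𝓝[>] (0:ℝ)] fun _ : ℝ => (1:ℝ) := by
        have hO : (fun h : ℝ => 1/h^2) =O[𝓝[>] (0:ℝ)] fun h : ℝ => 1/h^2 := isBigO_refl _ _
        have C0 := hO.smul_isLittleO B
        apply C0.congr' _ _
        · filter_upwards [self_mem_nhdsWithin] with h (hpos : 0 < h)
          simp only [smul_eq_mul]
          field_simp
        · filter_upwards [self_mem_nhdsWithin] with h (hpos : 0 < h)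
          simp only [smul_eq_mul]
          field_simp
      exact isLittleO_const_const_iff.1 C
    have hscale : f'' v w = ε * (ε * (f'' (1, 0) (0, 1))) := by
      have hv' : v = ε • ((1:ℝ), (0:ℝ)) := by rw [hv]; simp [Prod.ext_iff]
      have hw' : w = ε • ((0:ℝ), (1:ℝ)) := by rw [hw]; simp [Prod.ext_iff]
      rw [hv', hw']
      simp only [map_smul, ContinuousLinearMap.smul_apply, smul_eq_mul]
    have hz : ε * (ε * (f'' (1, 0) (0, 1))) = 0 := by rw [← hscale]; exact hvw
    rcases mul_eq_zero.1 hz with h | h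
    · exact absurd h (ne_of_gt hε)
    · rcases mul_eq_zero.1 h with h' | h'
      · exact absurd h' (ne_of_gt hε)
      · exact h'
  -- Step 4: convert to iterated partial derivatives
  show deriv (fun u => deriv (fun v => g11 (u, v)) v0) u0
      + deriv (fun u => deriv (fun v => g22 (u, v)) v0) u0 = 0
  rw [mixed_eq g11 D hD hg11 u0 v0 hp0, mixed_eq g22 D hD hg22 u0 v0 hp0]
  have hd11 : DifferentiableAt ℝ (fderiv ℝ g11) (u0, v0) := by
    have h1 : ContDiffOn ℝ 1 (fderiv ℝ g11) D := hg11.fderiv_of_isOpen hD (by norm_num)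
    exact (h1.differentiableOn one_ne_zero).differentiableAt (hD.mem_nhds hp0)
  have hd22 : DifferentiableAt ℝ (fderiv ℝ g22) (u0, v0) := by
    have h1 : ContDiffOn ℝ 1 (fderiv ℝ g22) D := hg22.fderiv_of_isOpen hD (by norm_num)
    exact (h1.differentiableOn one_ne_zero).differentiableAt (hD.mem_nhds hp0)
  have hevF : fderiv ℝ F =ᶠ[𝓝 ((u0, v0) : ℝ × ℝ)]
      (fun q => fderiv ℝ g11 q + fderiv ℝ g22 q) := by
    filter_upwards [hD.mem_nhds hp0] with q hq
    exact fderiv_add ((hg11.differentiableOn two_ne_zero).differentiableAt (hD.mem_nhds hq))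
      ((hg22.differentiableOn two_ne_zero).differentiableAt (hD.mem_nhds hq))
  have hsplit : f'' = fderiv ℝ (fderiv ℝ g11) (u0, v0) + fderiv ℝ (fderiv ℝ g22) (u0, v0) := by
    rw [hf''def, hevF.fderiv_eq]
    exact fderiv_add hd11 hd22
  have := hmixed
  rw [hsplit] at this
  simpa [ContinuousLinearMap.add_apply] using this
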